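/- Let x and y be strings of the same length n over an alphabet Σ with d = ED(x,y) ≥ 1. For every integer t with 1 ≤ t ≤ d, there exist decompositions x = x^1 ∘ x^2 ∘ ⋯ ∘ x^t and y = y^1 ∘ y^2 ∘ ⋯ ∘ y^t into t (possibly empty) consecutive blocks such that d = Σ_{i=1}^t ED(x^i, y^i) and ED(x^i, y^i) ≤ ⌈d/t⌉ for every i ∈ {1,…,t}. -/

import Mathlib

open List

/-- Costs for edit distance (the Mathlib `Levenshtein.Cost` of Dec 2024, since removed). -/
structure Levenshtein.Cost (α β δ : Type*) where
  delete : α → δ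
  insert : β → δ
  substitute : α → β → δ

/-- The default (unit) cost, as in the Mathlib of Dec 2024. -/
def Levenshtein.defaultCost {α : Type*} [DecidableEq α] : Levenshtein.Cost α α ℕ where
  delete _ := 1
  insert _ := 1
  substitute a b := if a = b then 0 else 1

/-- Levenshtein distance, by the recurrence characterizing the Mathlib definition of Dec 2024. -/
def levenshtein {α β δ : Type*} [AddZeroClass δ] [Min δ] (C : Levenshtein.Cost α β δ) :
    List α → List β → δ
  | [], ys => (ys.map C.insert).sum
  | x :: xs, [] => C.delete x + levenshtein C xs []
  | x :: xs, y :: ys =>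
    min (C.delete x + levenshtein C xs (y :: ys))
      (min (C.insert y + levenshtein C (x :: xs) ys) (C.substitute x y + levenshtein C xs ys))

/-- Edit distance: minimum number of single-symbol insertions, deletions and
substitutions needed to transform `u` into `v` (Levenshtein distance with unit costs). -/
def ED {α : Type*} [DecidableEq α] (u v : List α) : ℕ :=
  levenshtein Levenshtein.defaultCost u v

theorem levenshtein_nil_cons {α β δ : Type*} [AddZeroClass δ] [Min δ]
    (C : Levenshtein.Cost α β δ) (y : β) (ys : List β) :
    levenshtein C [] (y :: ys) = C.insert y + levenshtein C [] ys := by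
  simp only [levenshtein, List.map_cons, List.sum_cons]

theorem levenshtein_cons_nil {α β δ : Type*} [AddZeroClass δ] [Min δ]
    (C : Levenshtein.Cost α β δ) (x : α) (xs : List α) :
    levenshtein C (x :: xs) [] = C.delete x + levenshtein C xs [] := by
  rw [levenshtein.eq_2]

theorem levenshtein_cons_cons {α β δ : Type*} [AddZeroClass δ] [Min δ]
    (C : Levenshtein.Cost α β δ) (x : α) (xs : List α) (y : β) (ys : List β) :
    levenshtein C (x :: xs) (y :: ys) =
      min (C.delete x + levenshtein C xs (y :: ys))
        (min (C.insert y + levenshtein C (x :: xs) ys) (C.substitute x y + levenshtein C xs ys)) := by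
  rw [levenshtein.eq_3]

theorem Levenshtein.defaultCost_insert {α : Type*} [DecidableEq α] (a : α) :
    (Levenshtein.defaultCost : Levenshtein.Cost α α ℕ).insert a = 1 := rfl

theorem Levenshtein.defaultCost_delete {α : Type*} [DecidableEq α] (a : α) :
    (Levenshtein.defaultCost : Levenshtein.Cost α α ℕ).delete a = 1 := rfl

section aux
variable {α : Type*} [DecidableEq α]

theorem ED_nil_left (v : List α) : ED [] v = v.length := by
  induction v with
  | nil => simp [ED, levenshtein.eq_1]
  | cons b v ih =>
    simp only [ED] at ih ⊢
    rw [levenshtein_nil_cons]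
    simp only [Levenshtein.defaultCost_insert, List.length_cons]
    omega

theorem ED_nil_right (u : List α) : ED u [] = u.length := by
  induction u with
  | nil => simp [ED, levenshtein.eq_1]
  | cons a u ih =>
    simp only [ED] at ih ⊢
    rw [levenshtein_cons_nil]
    simp only [Levenshtein.defaultCost_delete, List.length_cons]
    omega

theorem ED_cons_cons (a b : α) (u v : List α) :
    ED (a :: u) (b :: v) =
      min (1 + ED u (b :: v)) (min (1 + ED (a :: u) v)
        ((if a = b then 0 else 1) + ED u v)) := by
  show levenshtein _ _ _ = _
  rw [levenshtein_cons_cons]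
  rfl

theorem ED_cons_left_le (a : α) (u v : List α) : ED (a :: u) v ≤ 1 + ED u v := by
  cases v with
  | nil => rw [ED_nil_right, ED_nil_right]; simp only [List.length_cons]; omega
  | cons b v => rw [ED_cons_cons]; omega

theorem ED_cons_right_le (b : α) (u v : List α) : ED u (b :: v) ≤ 1 + ED u v := by
  cases u with
  | nil => rw [ED_nil_left, ED_nil_left]; simp only [List.length_cons]; omega
  | cons a u => rw [ED_cons_cons]; omega

theorem ED_cons_cons_le_of_eq (a : α) (u v : List α) :
    ED (a :: u) (a :: v) ≤ ED u v := by
  have h := ED_cons_cons a a u v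
  rw [if_pos rfl] at h
  omega

theorem ED_cons_cons_le_of_ne {a b : α} (hab : a ≠ b) (u v : List α) :
    ED (a :: u) (b :: v) ≤ 1 + ED u v := by
  have h := ED_cons_cons a b u v
  rw [if_neg hab] at h
  omega

theorem ED_append_le : ∀ (u1 v1 u2 v2 : List α),
    ED (u1 ++ u2) (v1 ++ v2) ≤ ED u1 v1 + ED u2 v2
  | [], [], u2, v2 => by simp [ED_nil_left, ED_nil_right]
  | [], b :: v1, u2, v2 => by
    have h1 := ED_cons_right_le b u2 (v1 ++ v2)
    have h2 := ED_append_le [] v1 u2 v2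
    simp only [List.nil_append, List.cons_append] at *
    simp only [ED_nil_left] at *
    simp only [List.length_cons]
    omega
  | a :: u1, [], u2, v2 => by
    have h1 := ED_cons_left_le a (u1 ++ u2) v2
    have h2 := ED_append_le u1 [] u2 v2
    simp only [List.nil_append, List.cons_append] at *
    simp only [ED_nil_right] at *
    simp only [List.length_cons]
    omega
  | a :: u1, b :: v1, u2, v2 => by
    have h1 := ED_cons_left_le a (u1 ++ u2) (b :: (v1 ++ v2))
    have h2 := ED_cons_right_le b (a :: (u1 ++ u2)) (v1 ++ v2)
    have i1 := ED_append_le u1 (b :: v1) u2 v2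
    have i2 := ED_append_le (a :: u1) v1 u2 v2
    have i3 := ED_append_le u1 v1 u2 v2
    simp only [List.cons_append] at *
    rw [ED_cons_cons a b u1 v1]
    by_cases hab : a = b
    · have h3 : ED (a :: (u1 ++ u2)) (b :: (v1 ++ v2)) ≤ ED (u1 ++ u2) (v1 ++ v2) := by
        subst hab; exact ED_cons_cons_le_of_eq a _ _
      simp only [if_pos hab]
      omega
    · have h3 := ED_cons_cons_le_of_ne hab (u1 ++ u2) (v1 ++ v2)
      simp only [if_neg hab]
      omega
termination_by u1 v1 _ _ => u1.length + v1.length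

/-- Split lemma: any value `k ≤ ED x y` can be realized exactly as the edit distance
of a prefix pair, with the suffix pair accounting exactly for the rest. -/
theorem ED_split : ∀ (x y : List α) (k : ℕ), k ≤ ED x y →
    ∃ x1 x2 y1 y2 : List α, x = x1 ++ x2 ∧ y = y1 ++ y2 ∧
      ED x1 y1 = k ∧ ED x2 y2 = ED x y - k
  | x, y, 0, _ => ⟨[], x, [], y, rfl, rfl, by simp [ED, levenshtein.eq_1], by simp [ED_nil_left]⟩
  | [], y, k + 1, h => by
    rw [ED_nil_left] at h
    refine ⟨[], [], y.take (k+1), y.drop (k+1), rfl, (y.take_append_drop _).symm, ?_, ?_⟩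
    · rw [ED_nil_left, List.length_take]; omega
    · rw [ED_nil_left, ED_nil_left, List.length_drop]
  | a :: x, [], k + 1, h => by
    rw [ED_nil_right] at h
    refine ⟨(a :: x).take (k+1), (a :: x).drop (k+1), [], [], ((a::x).take_append_drop _).symm,
      rfl, ?_, ?_⟩
    · rw [ED_nil_right, List.length_take]; omega
    · rw [ED_nil_right, ED_nil_right, List.length_drop]
  | a :: x, b :: y, k + 1, h => by
    rw [ED_cons_cons] at h
    have hA := ED_cons_left_le a x (b :: y)
    have hB := ED_cons_right_le b (a :: x) y
    have hE := ED_cons_cons a b x y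
    rcases Nat.lt_or_ge (ED (a :: x) (b :: y)) (1 + ED x (b :: y)) with hc | hc
    · rcases Nat.lt_or_ge (ED (a :: x) (b :: y)) (1 + ED (a :: x) y) with hc2 | hc2
      · -- substitution branch
        by_cases hab : a = b
        · rw [if_pos hab] at hE; rw [if_pos hab] at h
          have hle0 := ED_cons_cons_le_of_eq a x y
          have heq : ED (a :: x) (b :: y) = ED x y := by subst hab; omega
          obtain ⟨x1, x2, y1, y2, hx, hy, h1, h2⟩ := ED_split x y (k+1) (by omega)
          refine ⟨a :: x1, x2, b :: y1, y2, by simp [hx], by simp [hy], ?_, by omega⟩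
          have hle : ED (a :: x1) (b :: y1) ≤ k + 1 := by
            subst hab
            have := ED_cons_cons_le_of_eq a x1 y1; omega
          have hge := ED_append_le (a :: x1) y1 x2 y2
          have hge := ED_append_le (a :: x1) (b :: y1) x2 y2
          rw [show (a :: x1) ++ x2 = a :: x from by rw [List.cons_append, ← hx],
            show (b :: y1) ++ y2 = b :: y from by rw [List.cons_append, ← hy]] at hge
          omega
        · rw [if_neg hab] at hE; rw [if_neg hab] at h
          have heq : ED (a :: x) (b :: y) = 1 + ED x y := by omega
          obtain ⟨x1, x2, y1, y2, hx, hy, h1, h2⟩ := ED_split x y k (by omega)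
          refine ⟨a :: x1, x2, b :: y1, y2, by simp [hx], by simp [hy], ?_, by omega⟩
          have hle : ED (a :: x1) (b :: y1) ≤ k + 1 := by
            have := ED_cons_cons a b x1 y1
            rw [if_neg hab] at this; omega
          have hge := ED_append_le (a :: x1) (b :: y1) x2 y2
          rw [show (a :: x1) ++ x2 = a :: x from by rw [List.cons_append, ← hx],
            show (b :: y1) ++ y2 = b :: y from by rw [List.cons_append, ← hy]] at hge
          omega
      · -- insert branch
        have heq : ED (a :: x) (b :: y) = 1 + ED (a :: x) y := by omega
        obtain ⟨x1, x2, y1, y2, hx, hy, h1, h2⟩ := ED_split (a :: x) y k (by omega)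
        refine ⟨x1, x2, b :: y1, y2, hx, by simp [hy], ?_, by omega⟩
        have hle : ED x1 (b :: y1) ≤ k + 1 := by
          have := ED_cons_right_le b x1 y1; omega
        have hge := ED_append_le x1 (b :: y1) x2 y2
        rw [← hx, show (b :: y1) ++ y2 = b :: y from by rw [List.cons_append, ← hy]] at hge
        omega
    · -- delete branch
      have heq : ED (a :: x) (b :: y) = 1 + ED x (b :: y) := by omega
      obtain ⟨x1, x2, y1, y2, hx, hy, h1, h2⟩ := ED_split x (b :: y) k (by omega)
      refine ⟨a :: x1, x2, y1, y2, by simp [hx], hy, ?_, by omega⟩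
      have hle : ED (a :: x1) y1 ≤ k + 1 := by
        have := ED_cons_left_le a x1 y1; omega
      have hge := ED_append_le (a :: x1) y1 x2 y2
      rw [show (a :: x1) ++ x2 = a :: x from by rw [List.cons_append, ← hx], ← hy] at hge
      omega
termination_by x y k _ => x.length + y.length

theorem ED_blocks : ∀ (t : ℕ) (x y : List α) (c : ℕ), 1 ≤ t → ED x y ≤ t * c →
    ∃ X Y : Fin t → List α,
      x = (List.ofFn X).flatten ∧ y = (List.ofFn Y).flatten ∧
      ED x y = ∑ i : Fin t, ED (X i) (Y i) ∧ ∀ i, ED (X i) (Y i) ≤ c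
  | 1, x, y, c, _, h => by
    refine ⟨fun _ => x, fun _ => y, by simp, by simp, by simp, fun i => ?_⟩
    simpa using h
  | t + 2, x, y, c, _, h => by
    obtain ⟨x1, x2, y1, y2, hx, hy, h1, h2⟩ := ED_split x y (min c (ED x y)) (min_le_right _ _)
    have hmul : (t + 2) * c = (t + 1) * c + c := by ring
    obtain ⟨X, Y, hX, hY, hsum, hbd⟩ := ED_blocks (t + 1) x2 y2 c (by omega) (by omega)
    refine ⟨Fin.cons x1 X, Fin.cons y1 Y, ?_, ?_, ?_, ?_⟩
    · simp [List.ofFn_succ, hx, hX, Fin.cons_succ]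
    · simp [List.ofFn_succ, hy, hY, Fin.cons_succ]
    · rw [Fin.sum_univ_succ]
      simp only [Fin.cons_zero, Fin.cons_succ]
      omega
    · intro i
      refine Fin.cases ?_ ?_ i
      · simp only [Fin.cons_zero, h1]; omega
      · intro j; simpa using hbd j

end aux

/-- If `x, y` have the same length `n` and `d = ED(x,y) ≥ 1`, then for
every `1 ≤ t ≤ d` there are decompositions `x = x^1 ∘ ⋯ ∘ x^t`, `y = y^1 ∘ ⋯ ∘ y^t`
into `t` (possibly empty) consecutive blocks with `d = Σ_i ED(x^i, y^i)` and
`ED(x^i, y^i) ≤ ⌈d/t⌉` for every `i`. -/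
theorem stmt3 {α : Type*} [DecidableEq α] (n : ℕ) (x y : List α)
    (hx : x.length = n) (hy : y.length = n)
    (d : ℕ) (hd : d = ED x y) (hd1 : 1 ≤ d)
    (t : ℕ) (ht1 : 1 ≤ t) (htd : t ≤ d) :
    ∃ X Y : Fin t → List α,
      x = (List.ofFn X).flatten ∧
      y = (List.ofFn Y).flatten ∧
      d = ∑ i : Fin t, ED (X i) (Y i) ∧
      ∀ i : Fin t, ED (X i) (Y i) ≤ ⌈(d : ℚ) / (t : ℚ)⌉₊ := by
  set c : ℕ := ⌈(d : ℚ) / (t : ℚ)⌉₊ with hc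
  have hdc : d ≤ t * c := by
    have h1 : (d : ℚ) / (t : ℚ) ≤ (c : ℚ) := Nat.le_ceil _
    have ht0 : (0 : ℚ) < (t : ℚ) := by exact_mod_cast ht1
    rw [div_le_iff₀ ht0] at h1
    have : (d : ℚ) ≤ ((t * c : ℕ) : ℚ) := by push_cast; linarith
    exact_mod_cast this
  obtain ⟨X, Y, h1, h2, h3, h4⟩ := ED_blocks t x y c ht1 (hd ▸ hdc)
  exact ⟨X, Y, h1, h2, hd ▸ h3, h4⟩
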